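/- Let M: H → ℂ be a function on N×N Hermitian matrices that is additive (M(d₁+d₂) = M(d₁)+M(d₂)) and unitarily invariant (M(u*du) = M(d) for every unitary u). Then M(d) = 0 for every traceless Hermitian matrix d. -/

import Mathlib

open Matrix

section aux

variable {N : ℕ}

lemma perm_matrix_conjTranspose (σ : Equiv.Perm (Fin N)) :
    (σ.toPEquiv.toMatrix : Matrix (Fin N) (Fin N) ℂ)ᴴ = σ.symm.toPEquiv.toMatrix := by
  ext i j
  rw [conjTranspose_apply, PEquiv.toMatrix_apply, PEquiv.toMatrix_apply]
  simp only [Equiv.toPEquiv_apply, Option.mem_def, Option.some_inj]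
  rw [show (if σ j = i then (1:ℂ) else 0) = if (Equiv.symm σ) i = j then 1 else 0 from
    if_congr (by constructor <;> (rintro rfl; simp)) rfl rfl]
  split_ifs <;> simp

lemma perm_matrix_mem_unitary (σ : Equiv.Perm (Fin N)) :
    (σ.toPEquiv.toMatrix : Matrix (Fin N) (Fin N) ℂ) ∈ Matrix.unitaryGroup (Fin N) ℂ := by
  rw [Matrix.mem_unitaryGroup_iff']
  show (σ.toPEquiv.toMatrix : Matrix (Fin N) (Fin N) ℂ)ᴴ * _ = 1
  rw [perm_matrix_conjTranspose, ← PEquiv.toMatrix_trans, ← Equiv.toPEquiv_trans]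
  simp

lemma perm_conj_diagonal (σ : Equiv.Perm (Fin N)) (c : Fin N → ℂ) :
    (σ.toPEquiv.toMatrix : Matrix (Fin N) (Fin N) ℂ)ᴴ * diagonal c * σ.toPEquiv.toMatrix
      = diagonal (c ∘ σ.symm) := by
  rw [perm_matrix_conjTranspose, PEquiv.toMatrix_toPEquiv_mul, PEquiv.mul_toMatrix_toPEquiv,
    submatrix_submatrix, Function.comp_id, Function.id_comp,
    submatrix_diagonal _ _ σ.symm.injective]

lemma M_sum (M : Matrix (Fin N) (Fin N) ℂ → ℂ)
    (hadd : ∀ d₁ d₂ : Matrix (Fin N) (Fin N) ℂ, d₁.IsHermitian → d₂.IsHermitian →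
      M (d₁ + d₂) = M d₁ + M d₂)
    {ι : Type*} (s : Finset ι) (f : ι → Matrix (Fin N) (Fin N) ℂ)
    (hf : ∀ i, (f i).IsHermitian) :
    M (∑ i ∈ s, f i) = ∑ i ∈ s, M (f i) := by
  classical
  have h0 : M 0 = 0 := by
    have := hadd 0 0 isHermitian_zero isHermitian_zero
    simpa using this.symm
  induction s using Finset.induction with
  | empty => simpa
  | insert _ _ h ih =>
    rw [Finset.sum_insert h, Finset.sum_insert h,
      hadd _ _ (hf _) ?_, ih]
    show (∑ i ∈ _, f i)ᴴ = _
    rw [conjTranspose_sum]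
    exact Finset.sum_congr rfl fun i _ => hf i

end aux

/-- If `M` is additive on Hermitian matrices and invariant under unitary conjugation,
then `M(d) = 0` for every traceless Hermitian matrix `d`. -/
theorem stmt_6 (N : ℕ) (M : Matrix (Fin N) (Fin N) ℂ → ℂ)
    (hadd : ∀ d₁ d₂ : Matrix (Fin N) (Fin N) ℂ, d₁.IsHermitian → d₂.IsHermitian →
      M (d₁ + d₂) = M d₁ + M d₂)
    (hinv : ∀ (d : Matrix (Fin N) (Fin N) ℂ), d.IsHermitian →
      ∀ u ∈ Matrix.unitaryGroup (Fin N) ℂ, M (uᴴ * d * u) = M d)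
    (d : Matrix (Fin N) (Fin N) ℂ) (hd : d.IsHermitian) (htr : d.trace = 0) :
    M d = 0 := by
  rcases Nat.eq_zero_or_pos N with hN | hN
  · subst hN
    have hd0 : d = 0 := by ext i; exact absurd i.2 (by omega)
    have := hadd 0 0 isHermitian_zero isHermitian_zero
    rw [hd0]; simpa using this.symm
  haveI : NeZero N := ⟨hN.ne'⟩
  classical
  set c : Fin N → ℂ := RCLike.ofReal ∘ hd.eigenvalues with hc
  set U : Matrix (Fin N) (Fin N) ℂ := (hd.eigenvectorUnitary : Matrix (Fin N) (Fin N) ℂ) with hU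
  have hspec : d = U * diagonal c * star U := hd.spectral_theorem
  have hDherm : (diagonal c).IsHermitian := by
    apply isHermitian_diagonal_of_self_adjoint
    ext i
    simp [hc, Function.comp, Pi.star_apply, RCLike.star_def, RCLike.conj_ofReal]
  -- M d = M (diagonal c)
  have hMd : M d = M (diagonal c) := by
    have hmem : star U ∈ Matrix.unitaryGroup (Fin N) ℂ := by
      rw [Matrix.mem_unitaryGroup_iff, star_star]
      exact hd.eigenvectorUnitary.prop.1
    have := hinv (diagonal c) hDherm (star U) hmem
    rw [star_eq_conjTranspose, conjTranspose_conjTranspose] at this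
    rw [hspec, ← star_eq_conjTranspose] at *
    exact this
  -- trace of diagonal c is 0
  have htrD : ∑ j, c j = 0 := by
    have h1 : (star U) * U = 1 := hd.eigenvectorUnitary.prop.1
    have : d.trace = (diagonal c).trace := by
      rw [hspec, trace_mul_cycle, h1, one_mul]
    rw [htr] at this
    simpa [trace_diagonal] using this.symm
  -- family of permuted diagonal matrices
  set f : Fin N → Matrix (Fin N) (Fin N) ℂ := fun k => diagonal (c ∘ (Equiv.addLeft k).symm)
    with hf
  have hfherm : ∀ k, (f k).IsHermitian := by
    intro k
    apply isHermitian_diagonal_of_self_adjoint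
    ext i
    simp [hc, Function.comp, Pi.star_apply, RCLike.star_def, RCLike.conj_ofReal]
  have hMf : ∀ k, M (f k) = M (diagonal c) := by
    intro k
    have := hinv (diagonal c) hDherm _ (perm_matrix_mem_unitary (Equiv.addLeft k))
    rw [perm_conj_diagonal] at this
    exact this
  have hsum0 : (∑ k, f k) = 0 := by
    ext i j
    simp only [hf, Finset.sum_apply, Matrix.sum_apply, diagonal_apply, Matrix.zero_apply]
    rcases eq_or_ne i j with rfl | hij
    · simp only [if_pos rfl]
      calc ∑ k : Fin N, (c ∘ (Equiv.addLeft k).symm) i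
          = ∑ k : Fin N, c (((Equiv.neg (Fin N)).trans (Equiv.addRight i)) k) := by
            apply Finset.sum_congr rfl; intro k _
            simp [Equiv.addLeft, sub_eq_neg_add]
        _ = ∑ j, c j := Equiv.sum_comp _ _
        _ = 0 := htrD
    · simp [hij]
  have key : (N : ℂ) * M (diagonal c) = 0 := by
    have h1 : M (∑ k, f k) = ∑ k : Fin N, M (f k) := M_sum M hadd _ _ hfherm
    have h2 : M (∑ k, f k) = M 0 := by rw [hsum0]
    have h0 : M 0 = 0 := by
      have := hadd 0 0 isHermitian_zero isHermitian_zero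
      simpa using this.symm
    rw [h2, h0] at h1
    calc (N : ℂ) * M (diagonal c) = ∑ _k : Fin N, M (diagonal c) := by
          simp [Finset.sum_const, mul_comm]
      _ = ∑ k : Fin N, M (f k) := by
          apply Finset.sum_congr rfl; intro k _; rw [hMf k]
      _ = 0 := h1.symm
  have hNne : (N : ℂ) ≠ 0 := Nat.cast_ne_zero.mpr hN.ne'
  rw [hMd]
  exact (mul_eq_zero.mp key).resolve_left hNne
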